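/- arXiv:2207.13566 — 2 statements merged into one kernel-verified Lean document; each statement's English description precedes it below -/
import Mathlib

section
/- For all real θ and t ≥ 0, the function X(t) = A(e^{θ²t} − (4|θ|√t/√π) ∑_{n=0}^∞ 4^n (n+1)! (θ²t)^n / (2n+2)!) satisfies X(t) = A ∑_{n=0}^∞ (-1)^n (θ√t)^n / Γ(n/2 + 1) whenever θ ≥ 0. -/
open scoped Nat

lemma gamma_half_mul (k : ℕ) :
    Real.Gamma ((k : ℝ) + 1/2) * (4 ^ k * (k ! : ℝ)) =
      Real.sqrt Real.pi * ((2 * k)! : ℝ) := by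
  induction k with
  | zero =>
    rw [show ((0:ℕ):ℝ) + 1/2 = 1/2 by norm_num, Real.Gamma_one_half_eq]
    simp
  | succ k ih =>
    have hk : ((k : ℝ) + 1/2) ≠ 0 := by positivity
    have h1 : Real.Gamma (((k + 1 : ℕ) : ℝ) + 1/2)
        = ((k : ℝ) + 1/2) * Real.Gamma ((k : ℝ) + 1/2) := by
      rw [show (((k + 1 : ℕ) : ℝ) + 1/2) = ((k : ℝ) + 1/2) + 1 by push_cast; ring,
        Real.Gamma_add_one hk]
    have h2 : (2 * (k + 1))! = (2 * k + 2) * ((2 * k + 1) * (2 * k)!) := by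
      rw [show 2 * (k + 1) = (2 * k + 1) + 1 by ring, Nat.factorial_succ,
        Nat.factorial_succ]
    rw [h1, h2]
    push_cast [Nat.factorial_succ]
    have key : ((k:ℝ) + 1/2) * Real.Gamma ((k:ℝ) + 1/2) * (4 ^ (k+1) * (((k:ℝ) + 1) * (k ! : ℝ)))
        = ((2*(k:ℝ)+2) * (2*(k:ℝ)+1)) * (Real.Gamma ((k:ℝ) + 1/2) * (4 ^ k * (k ! : ℝ))) := by
      rw [pow_succ]; ring
    rw [key, ih]; ring

lemma nat_fact_ineq (k : ℕ) : 4 ^ k * (k + 1)! * k ! ≤ (2 * k + 2)! := by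
  induction k with
  | zero => simp
  | succ k ih =>
    have h2 : (2 * (k + 1) + 2)! = (2 * k + 4) * ((2 * k + 3) * (2 * k + 2)!) := by
      rw [show 2 * (k + 1) + 2 = (2 * k + 3) + 1 by ring, Nat.factorial_succ,
        Nat.factorial_succ]
    rw [h2]
    have : 4 ^ (k + 1) * (k + 1 + 1)! * (k + 1)! =
        (4 * (k + 2) * (k + 1)) * (4 ^ k * (k + 1)! * k !) := by
      simp [Nat.factorial_succ, pow_succ]; ring
    rw [this]
    calc (4 * (k + 2) * (k + 1)) * (4 ^ k * (k + 1)! * k !)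
        ≤ (4 * (k + 2) * (k + 1)) * (2 * k + 2)! := by
          exact Nat.mul_le_mul_left _ ih
      _ ≤ ((2 * k + 4) * (2 * k + 3)) * (2 * k + 2)! := by
          apply Nat.mul_le_mul_right; nlinarith
      _ = (2 * k + 4) * ((2 * k + 3) * (2 * k + 2)!) := by ring

theorem solution_eq_mittag_leffler (A θ t : ℝ) (hθ : 0 ≤ θ) (ht : 0 ≤ t) :
    A * (Real.exp (θ ^ 2 * t) -
        (4 * |θ| * Real.sqrt t / Real.sqrt Real.pi) *
          ∑' n : ℕ, 4 ^ n * (Nat.factorial (n + 1) : ℝ) * (θ ^ 2 * t) ^ n /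
            (Nat.factorial (2 * n + 2) : ℝ)) =
      A * ∑' n : ℕ, (-1) ^ n * (θ * Real.sqrt t) ^ n / Real.Gamma ((n : ℝ) / 2 + 1) := by
  set x := θ * Real.sqrt t with hxdef
  have hx : 0 ≤ x := mul_nonneg hθ (Real.sqrt_nonneg t)
  have hy : θ ^ 2 * t = x ^ 2 := by
    rw [hxdef, mul_pow, Real.sq_sqrt ht]
  set y := x ^ 2 with hydef
  have hy0 : 0 ≤ y := sq_nonneg x
  have hπ : 0 < Real.sqrt Real.pi := Real.sqrt_pos.mpr Real.pi_pos
  set f : ℕ → ℝ := fun n => (-1) ^ n * x ^ n / Real.Gamma ((n : ℝ) / 2 + 1) with hf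
  set g : ℕ → ℝ := fun k =>
    4 ^ k * ((k + 1)! : ℝ) * y ^ k / ((2 * k + 2)! : ℝ) with hg
  -- even terms
  have heven : ∀ k : ℕ, f (2 * k) = y ^ k / (k ! : ℝ) := by
    intro k
    have : ((2 * k : ℕ) : ℝ) / 2 + 1 = (k : ℝ) + 1 := by push_cast; ring
    simp only [hf, this, Real.Gamma_nat_eq_factorial, pow_mul, hydef]
    norm_num
  -- odd terms
  have hodd : ∀ k : ℕ, f (2 * k + 1) = -(4 * x / Real.sqrt Real.pi) * g k := by
    intro k
    have h1 : ((2 * k + 1 : ℕ) : ℝ) / 2 + 1 = ((k + 1 : ℕ) : ℝ) + 1/2 := by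
      push_cast; ring
    have h2 := gamma_half_mul (k + 1)
    have hΓpos : 0 < Real.Gamma (((k + 1 : ℕ) : ℝ) + 1/2) :=
      Real.Gamma_pos_of_pos (by positivity)
    have h3 : Real.Gamma (((k + 1 : ℕ) : ℝ) + 1/2) =
        Real.sqrt Real.pi * ((2 * (k + 1))! : ℝ) / (4 ^ (k + 1) * ((k + 1)! : ℝ)) :=
      eq_div_of_mul_eq (by positivity) h2
    have hx2 : x ^ (2 * k + 1) = x * y ^ k := by
      rw [hydef]; ring
    have hfact : ((2 * (k + 1))! : ℝ) = ((2 * k + 2)! : ℝ) := by norm_num; ring_nf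
    simp only [hf, hg, h1, h3, hx2, hfact]
    have hfp : (0 : ℝ) < ((2 * k + 2)! : ℝ) := by positivity
    have hfp2 : (0 : ℝ) < ((k + 1)! : ℝ) := by positivity
    rw [pow_succ]
    field_simp
    have hm : ((-1:ℝ)) ^ (2 * k) = 1 := by rw [pow_mul]; norm_num
    rw [hm]
    ring
  -- summability
  have he : Summable (fun k => f (2 * k)) := by
    simp only [heven]
    exact Real.summable_pow_div_factorial y
  have hgsum : Summable g := by
    apply Summable.of_nonneg_of_le (fun k => by positivity)
      (fun k => ?_) (Real.summable_pow_div_factorial y)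
    have hle : (4 ^ k * ((k + 1)! : ℝ) * (k ! : ℝ)) ≤ ((2 * k + 2)! : ℝ) := by
      exact_mod_cast nat_fact_ineq k
    have hfp : (0 : ℝ) < ((2 * k + 2)! : ℝ) := by positivity
    have hkp : (0 : ℝ) < (k ! : ℝ) := by positivity
    rw [hg, div_le_div_iff₀ hfp hkp]
    calc 4 ^ k * ((k + 1)! : ℝ) * y ^ k * (k ! : ℝ)
        = (4 ^ k * ((k + 1)! : ℝ) * (k ! : ℝ)) * y ^ k := by ring
      _ ≤ ((2 * k + 2)! : ℝ) * y ^ k := by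
          exact mul_le_mul_of_nonneg_right hle (by positivity)
      _ = y ^ k * ((2 * k + 2)! : ℝ) := by ring
  have ho : Summable (fun k => f (2 * k + 1)) := by
    simp only [hodd]
    exact hgsum.mul_left _
  have hsplit := tsum_even_add_odd he ho
  have hevensum : ∑' k, f (2 * k) = Real.exp y := by
    rw [tsum_congr heven, Real.exp_eq_exp_ℝ, NormedSpace.exp_eq_tsum_div]
  have hoddsum : ∑' k, f (2 * k + 1) = -(4 * x / Real.sqrt Real.pi) * ∑' k, g k := by
    rw [tsum_congr hodd, tsum_mul_left]
  have habs : |θ| = θ := abs_of_nonneg hθ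
  have hS : (∑' n : ℕ, 4 ^ n * ((n + 1)! : ℝ) * (θ ^ 2 * t) ^ n /
      ((2 * n + 2)! : ℝ)) = ∑' k, g k := by
    apply tsum_congr; intro n; rw [hg, hy]
  rw [hS, habs, hy, ← hsplit, hevensum, hoddsum]
  have : 4 * θ * Real.sqrt t = 4 * x := by rw [hxdef]; ring
  rw [this]
  ring
end

section
/- For all t > 0 and θ ≠ 0, the function f(t) = e^{θ²t} − (4|θ|√t/√π)∑_{n=0}^∞ 4^n(n+1)!(θ²t)^n/(2n+2)! satisfies 0 < f(t) < 1 for sufficiently small t > 0, and f(0) = 1. -/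
lemma nat_coeff_ineq (n : ℕ) : 2 * 4 ^ n * Nat.factorial (n + 1) ≤ Nat.factorial (2 * n + 2) := by
  induction n with
  | zero => simp [Nat.factorial]
  | succ k ih =>
    have h1 : 2 * (k + 1) + 2 = (2 * k + 2) + 2 := by ring
    rw [h1]
    have e1 : Nat.factorial ((2*k+2)+2) = (2*k+4) * ((2*k+3) * Nat.factorial (2*k+2)) := by
      rw [show (2*k+2)+2 = (2*k+3)+1 from rfl, Nat.factorial_succ, Nat.factorial_succ]
    have e2 : Nat.factorial (k + 1 + 1) = (k+2) * Nat.factorial (k+1) := by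
      simp [Nat.factorial]
    rw [e1, e2]
    calc 2 * 4 ^ (k+1) * ((k+2) * Nat.factorial (k+1))
        = (4 * (k+2)) * (2 * 4^k * Nat.factorial (k+1)) := by ring
      _ ≤ (4 * (k+2)) * Nat.factorial (2*k+2) := Nat.mul_le_mul_left _ ih
      _ ≤ (2*k+4) * ((2*k+3) * Nat.factorial (2*k+2)) := by
          rw [← mul_assoc]
          exact Nat.mul_le_mul_right _ (by nlinarith)

lemma coeff_le (n : ℕ) : (4:ℝ) ^ n * (Nat.factorial (n+1) : ℝ) / (Nat.factorial (2*n+2) : ℝ) ≤ 1/2 := by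
  rw [div_le_iff₀ (by positivity)]
  have := nat_coeff_ineq n
  have : (2:ℝ) * 4 ^ n * (Nat.factorial (n+1) : ℝ) ≤ (Nat.factorial (2*n+2) : ℝ) := by
    exact_mod_cast this
  linarith

lemma term_nonneg (x : ℝ) (hx : 0 ≤ x) (n : ℕ) :
    0 ≤ (4:ℝ) ^ n * (Nat.factorial (n+1) : ℝ) * x ^ n / (Nat.factorial (2*n+2) : ℝ) := by
  positivity

lemma term_le (x : ℝ) (hx : 0 ≤ x) (n : ℕ) :
    (4:ℝ) ^ n * (Nat.factorial (n+1) : ℝ) * x ^ n / (Nat.factorial (2*n+2) : ℝ) ≤ (1/2) * x ^ n := by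
  have h := coeff_le n
  have hxn : (0:ℝ) ≤ x ^ n := by positivity
  calc (4:ℝ) ^ n * (Nat.factorial (n+1) : ℝ) * x ^ n / (Nat.factorial (2*n+2) : ℝ)
      = ((4:ℝ) ^ n * (Nat.factorial (n+1) : ℝ) / (Nat.factorial (2*n+2) : ℝ)) * x ^ n := by ring
    _ ≤ (1/2) * x ^ n := mul_le_mul_of_nonneg_right h hxn

lemma series_summable (x : ℝ) (hx : 0 ≤ x) (hx1 : x < 1) :
    Summable (fun n : ℕ => (4:ℝ) ^ n * (Nat.factorial (n+1) : ℝ) * x ^ n / (Nat.factorial (2*n+2) : ℝ)) := by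
  apply Summable.of_nonneg_of_le (term_nonneg x hx) (term_le x hx)
  exact (summable_geometric_of_lt_one hx hx1).mul_left _

lemma series_ge (x : ℝ) (hx : 0 ≤ x) (hx1 : x < 1) :
    (1/2 : ℝ) ≤ ∑' n : ℕ, (4:ℝ) ^ n * (Nat.factorial (n+1) : ℝ) * x ^ n / (Nat.factorial (2*n+2) : ℝ) := by
  have h := Summable.le_tsum (series_summable x hx hx1) 0 (fun i _ => term_nonneg x hx i)
  simpa [Nat.factorial] using h

lemma series_le (x : ℝ) (hx : 0 ≤ x) (hx1 : x ≤ 1/2) :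
    (∑' n : ℕ, (4:ℝ) ^ n * (Nat.factorial (n+1) : ℝ) * x ^ n / (Nat.factorial (2*n+2) : ℝ)) ≤ 1 := by
  have hx1' : x < 1 := by linarith
  have h1 : (∑' n : ℕ, (4:ℝ) ^ n * (Nat.factorial (n+1) : ℝ) * x ^ n / (Nat.factorial (2*n+2) : ℝ))
      ≤ ∑' n : ℕ, (1/2 : ℝ) * x ^ n := by
    exact Summable.tsum_le_tsum (term_le x hx) (series_summable x hx hx1')
      ((summable_geometric_of_lt_one hx hx1').mul_left _)
  have h2 : (∑' n : ℕ, (1/2 : ℝ) * x ^ n) = (1/2) * (1 - x)⁻¹ := by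
    rw [tsum_mul_left, tsum_geometric_of_lt_one hx hx1']
  have h3 : (1/2 : ℝ) * (1 - x)⁻¹ ≤ 1 := by
    rw [mul_inv_le_iff₀ (by linarith)]
    linarith
  linarith [h1, h2 ▸ h1]

theorem fractional_elimination_factor_small_time (θ : ℝ) (hθ : θ ≠ 0) :
    (fun t : ℝ => Real.exp (θ ^ 2 * t) -
        (4 * |θ| * Real.sqrt t / Real.sqrt Real.pi) *
          ∑' n : ℕ, 4 ^ n * (Nat.factorial (n + 1) : ℝ) * (θ ^ 2 * t) ^ n /
            (Nat.factorial (2 * n + 2) : ℝ)) 0 = 1 ∧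
    ∃ δ : ℝ, 0 < δ ∧ ∀ t : ℝ, 0 < t → t < δ →
      0 < (fun t : ℝ => Real.exp (θ ^ 2 * t) -
        (4 * |θ| * Real.sqrt t / Real.sqrt Real.pi) *
          ∑' n : ℕ, 4 ^ n * (Nat.factorial (n + 1) : ℝ) * (θ ^ 2 * t) ^ n /
            (Nat.factorial (2 * n + 2) : ℝ)) t ∧
      (fun t : ℝ => Real.exp (θ ^ 2 * t) -
        (4 * |θ| * Real.sqrt t / Real.sqrt Real.pi) *
          ∑' n : ℕ, 4 ^ n * (Nat.factorial (n + 1) : ℝ) * (θ ^ 2 * t) ^ n /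
            (Nat.factorial (2 * n + 2) : ℝ)) t < 1 := by
  have hθ2 : 0 < θ ^ 2 := by positivity
  have hπ : (0:ℝ) < Real.pi := Real.pi_pos
  constructor
  · simp
  · refine ⟨min (1/(2*θ^2)) (min (1/(Real.pi*θ^2)) (Real.pi/(16*θ^2))), by positivity, ?_⟩
    intro t ht0 htδ
    simp only
    have ht1 : t < 1/(2*θ^2) := lt_of_lt_of_le htδ (min_le_left _ _)
    have ht2 : t < 1/(Real.pi*θ^2) := lt_of_lt_of_le htδ ((min_le_right _ _).trans (min_le_left _ _))
    have ht3 : t < Real.pi/(16*θ^2) := lt_of_lt_of_le htδ ((min_le_right _ _).trans (min_le_right _ _))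
    set x := θ^2 * t with hxdef
    have hx0 : 0 < x := mul_pos hθ2 ht0
    have hx12 : x < 1/2 := by
      rw [hxdef]
      calc θ^2 * t < θ^2 * (1/(2*θ^2)) := by exact mul_lt_mul_of_pos_left ht1 hθ2
        _ = 1/2 := by field_simp
    have hxπ : x * Real.pi < 1 := by
      rw [hxdef]
      have : θ^2 * t < θ^2 * (1/(Real.pi*θ^2)) := mul_lt_mul_of_pos_left ht2 hθ2
      have h2 : θ^2 * (1/(Real.pi*θ^2)) = 1/Real.pi := by field_simp
      rw [h2] at this
      calc θ^2*t*Real.pi < (1/Real.pi)*Real.pi := by exact mul_lt_mul_of_pos_right this hπ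
        _ = 1 := by field_simp
    have h16 : 16 * θ^2 * t < Real.pi := by
      have : 16*θ^2 * t < 16*θ^2 * (Real.pi/(16*θ^2)) := mul_lt_mul_of_pos_left ht3 (by positivity)
      have h2 : 16*θ^2 * (Real.pi/(16*θ^2)) = Real.pi := by field_simp
      linarith [h2 ▸ this]
    have hst : 0 < Real.sqrt t := Real.sqrt_pos.mpr ht0
    have hsπ : 0 < Real.sqrt Real.pi := Real.sqrt_pos.mpr hπ
    have hsqt : Real.sqrt t ^ 2 = t := Real.sq_sqrt ht0.le
    have hsqπ : Real.sqrt Real.pi ^ 2 = Real.pi := Real.sq_sqrt hπ.le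
    have habs : |θ| ^ 2 = θ ^ 2 := sq_abs θ
    have habs0 : 0 < |θ| := abs_pos.mpr hθ
    set S := ∑' n : ℕ, (4:ℝ) ^ n * (Nat.factorial (n+1) : ℝ) * x ^ n / (Nat.factorial (2*n+2) : ℝ) with hSdef
    have hS1 : (1/2 : ℝ) ≤ S := series_ge x hx0.le (by linarith)
    have hS2 : S ≤ 1 := series_le x hx0.le hx12.le
    set c := 4 * |θ| * Real.sqrt t / Real.sqrt Real.pi with hcdef
    have hc0 : 0 < c := by positivity
    have hc1 : c < 1 := by
      rw [hcdef, div_lt_one hsπ]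
      have : 4 * |θ| * Real.sqrt t < Real.sqrt Real.pi := by
        have h := (Real.lt_sqrt (by positivity)).mpr (show (4 * |θ| * Real.sqrt t)^2 < Real.pi by nlinarith)
        exact h
      exact this
    constructor
    · have hA : c * S ≤ c := by nlinarith
      have hexp : 1 < Real.exp x := by nlinarith [Real.add_one_le_exp x]
      linarith
    · -- exp x - 1 ≤ 2x < 2|θ|√t/√π ≤ c*S
      have hexpb : Real.exp x - 1 ≤ 2 * x := by
        have h := Real.exp_bound (x := x) (by rw [abs_of_pos hx0]; linarith) (n := 1) one_pos
        simp [Finset.sum_range_one, Nat.factorial] at h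
        have h2 := (abs_le.mp h).2
        rw [abs_of_pos hx0] at h2
        linarith
      have key : θ^2 * t * Real.sqrt Real.pi < |θ| * Real.sqrt t := by
        have ha2 : (|θ| * Real.sqrt t)^2 = θ^2 * t := by
          rw [mul_pow, habs, hsqt]
        have hb2 : (θ^2 * t * Real.sqrt Real.pi)^2 = (θ^2*t) * ((θ^2*t) * Real.pi) := by
          rw [mul_pow, hsqπ]; ring
        have hlt : (θ^2 * t * Real.sqrt Real.pi)^2 < (|θ| * Real.sqrt t)^2 := by
          rw [ha2, hb2]
          have : (θ^2*t) * ((θ^2*t) * Real.pi) < (θ^2*t) * 1 :=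
            mul_lt_mul_of_pos_left (by rw [← hxdef]; linarith [hxπ]) hx0
          linarith
        exact lt_of_pow_lt_pow_left₀ 2 (by positivity) hlt
      have h2x : 2 * x < 2 * |θ| * Real.sqrt t / Real.sqrt Real.pi := by
        rw [lt_div_iff₀ hsπ, hxdef]; linarith [key]
      have hcs : 2 * |θ| * Real.sqrt t / Real.sqrt Real.pi ≤ c * S := by
        have : c * (1/2) ≤ c * S := mul_le_mul_of_nonneg_left hS1 hc0.le
        have hch : c * (1/2) = 2 * |θ| * Real.sqrt t / Real.sqrt Real.pi := by
          rw [hcdef]; ring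
        linarith [hch ▸ this]
      linarith
end
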